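/- Let v(t) := ∂u(t; a, s)/∂s, where u(·;a,s) solves -(p u')' + q u = a m u with u(s;a,s)=0, u'(s;a,s)=1/p(s). Then v satisfies the same equation -(p v')' + q v = a m v, and v(s) = -1/p(s) < 0, while v(φ_a(s)) > 0. -/

import Mathlib

open Set

lemma sl_unique {p q m : ℝ → ℝ} {a : ℝ} (hp : Continuous p) (hq : Continuous q)
    (hm : Continuous m) (hppos : ∀ t, 0 < p t)
    {y y' z z' : ℝ → ℝ}
    (hy : ∀ t, HasDerivAt y (y' t) t ∧
      HasDerivAt (fun τ => p τ * y' τ) (q t * y t - a * m t * y t) t)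
    (hz : ∀ t, HasDerivAt z (z' t) t ∧
      HasDerivAt (fun τ => p τ * z' τ) (q t * z t - a * m t * z t) t)
    {t₀ : ℝ} (h0 : y t₀ = z t₀) (h1 : y' t₀ = z' t₀) :
    (∀ t, y t = z t) ∧ (∀ t, y' t = z' t) := by
  have key : ∀ t, y t = z t := by
    intro T
    set lo : ℝ := min t₀ T - 1 with hlo
    set hi : ℝ := max t₀ T + 1 with hhi
    have hlohi : lo ≤ hi := by
      have := min_le_max (a := t₀) (b := T); dsimp [lo, hi]; linarith
    set cl : ℝ → ℝ := fun τ => max lo (min hi τ) with hcl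
    have hclmem : ∀ τ, cl τ ∈ Icc lo hi := fun τ =>
      ⟨le_max_left _ _, max_le hlohi (min_le_left _ _)⟩
    have hcleq : ∀ τ ∈ Icc lo hi, cl τ = τ := by
      intro τ hτ
      simp only [cl, min_eq_right hτ.2, max_eq_right hτ.1]
    have hclcont : Continuous cl := continuous_const.max (continuous_const.min continuous_id)
    set c : ℝ → ℝ := fun τ => q τ - a * m τ with hc
    have hccont : Continuous c := hq.sub (continuous_const.mul hm)
    have hBcont : Continuous fun τ => max (1 / p τ) |c τ| :=
      (continuous_const.div hp fun t => (hppos t).ne').max hccont.abs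
    obtain ⟨C, hC⟩ := (isCompact_Icc (a := lo) (b := hi)).exists_bound_of_continuousOn
      hBcont.continuousOn
    have hC1 : ∀ τ, 1 / p (cl τ) ≤ C := fun τ =>
      le_trans (le_max_left _ _) (le_trans (le_abs_self _) (hC _ (hclmem τ)))
    have hC2 : ∀ τ, |c (cl τ)| ≤ C := fun τ =>
      le_trans (le_max_right _ _) (le_trans (le_abs_self _) (hC _ (hclmem τ)))
    set K : NNReal := Real.toNNReal C with hK
    set V : ℝ → ℝ × ℝ → ℝ × ℝ := fun τ x => (x.2 / p (cl τ), c (cl τ) * x.1) with hV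
    have hlip : ∀ τ, LipschitzOnWith K (V τ) univ := by
      intro τ
      rw [lipschitzOnWith_univ]
      apply LipschitzWith.of_dist_le_mul
      intro x x'
      have hd1 : dist (x.2 / p (cl τ)) (x'.2 / p (cl τ)) ≤ C * dist x x' := by
        rw [Real.dist_eq, div_sub_div_same, abs_div, abs_of_pos (hppos _)]
        rw [div_eq_mul_inv, mul_comm]
        have h1 : (p (cl τ))⁻¹ ≤ C := by
          have := hC1 τ; rwa [one_div] at this
        have h2 : |x.2 - x'.2| ≤ dist x x' := by
          rw [Prod.dist_eq]; exact le_trans (le_of_eq (Real.dist_eq _ _).symm) (le_max_right _ _)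
        have hpinv : (0:ℝ) ≤ (p (cl τ))⁻¹ := le_of_lt (inv_pos.mpr (hppos _))
        calc (p (cl τ))⁻¹ * |x.2 - x'.2| ≤ (p (cl τ))⁻¹ * dist x x' := by
              exact mul_le_mul_of_nonneg_left h2 hpinv
          _ ≤ C * dist x x' := mul_le_mul_of_nonneg_right h1 dist_nonneg
      have hd2 : dist (c (cl τ) * x.1) (c (cl τ) * x'.1) ≤ C * dist x x' := by
        rw [Real.dist_eq, ← mul_sub, abs_mul]
        have h2 : |x.1 - x'.1| ≤ dist x x' := by
          rw [Prod.dist_eq]; exact le_trans (le_of_eq (Real.dist_eq _ _).symm) (le_max_left _ _)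
        calc |c (cl τ)| * |x.1 - x'.1| ≤ |c (cl τ)| * dist x x' :=
              mul_le_mul_of_nonneg_left h2 (abs_nonneg _)
          _ ≤ C * dist x x' := mul_le_mul_of_nonneg_right (hC2 τ) dist_nonneg
      have hCK : C ≤ (K : ℝ) := Real.le_coe_toNNReal C
      rw [Prod.dist_eq]
      refine max_le (le_trans hd1 ?_) (le_trans hd2 ?_) <;>
        exact mul_le_mul_of_nonneg_right hCK dist_nonneg
    set F : ℝ → ℝ × ℝ := fun τ => (y τ, p τ * y' τ) with hF
    set G : ℝ → ℝ × ℝ := fun τ => (z τ, p τ * z' τ) with hG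
    have hFd : ∀ τ ∈ Ioo lo hi, HasDerivAt F (V τ (F τ)) τ ∧ F τ ∈ univ := by
      intro τ hτ
      refine ⟨?_, mem_univ _⟩
      have hcleq' : cl τ = τ := hcleq τ (Ioo_subset_Icc_self hτ)
      have h1 : (F τ).2 / p (cl τ) = y' τ := by
        simp only [F, hcleq']
        exact mul_div_cancel_left₀ _ (hppos τ).ne'
      have h2 : c (cl τ) * (F τ).1 = q τ * y τ - a * m τ * y τ := by
        simp only [F, c, hcleq']; ring
      have := ((hy τ).1.prodMk (hy τ).2)
      simp only [V, h1, h2]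
      exact this
    have hGd : ∀ τ ∈ Ioo lo hi, HasDerivAt G (V τ (G τ)) τ ∧ G τ ∈ univ := by
      intro τ hτ
      refine ⟨?_, mem_univ _⟩
      have hcleq' : cl τ = τ := hcleq τ (Ioo_subset_Icc_self hτ)
      have h1 : (G τ).2 / p (cl τ) = z' τ := by
        simp only [G, hcleq']
        exact mul_div_cancel_left₀ _ (hppos τ).ne'
      have h2 : c (cl τ) * (G τ).1 = q τ * z τ - a * m τ * z τ := by
        simp only [G, c, hcleq']; ring
      have := ((hz τ).1.prodMk (hz τ).2)
      simp only [V, h1, h2]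
      exact this
    have ht₀ : t₀ ∈ Ioo lo hi := by
      constructor
      · have := min_le_left t₀ T; dsimp [lo]; linarith
      · have := le_max_left t₀ T; dsimp [hi]; linarith
    have hT : T ∈ Ioo lo hi := by
      constructor
      · have := min_le_right t₀ T; dsimp [lo]; linarith
      · have := le_max_right t₀ T; dsimp [hi]; linarith
    have heq0 : F t₀ = G t₀ := by
      simp only [F, G, h0, h1]
    have := ODE_solution_unique_of_mem_Ioo (fun τ _ => hlip τ) ht₀ hFd hGd heq0 hT
    exact congrArg Prod.fst this
  refine ⟨key, fun t => ?_⟩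
  have hyz : y = z := funext key
  have := (hy t).1
  rw [hyz] at this
  exact this.unique (hz t).1

/-- Let `v(t) = ∂u(t;a,s)/∂s`, where `u σ` (for `σ` near `s`)
solves `-(p u')' + q u = a·m·u` with `u σ σ = 0`, `(u σ)' σ = 1/p σ`.  Then `v`
satisfies the same equation, `v s = -1/p s < 0`, and `v(φ_a(s)) > 0`, where
`φ_a(s)` is the first zero of `u s` after `s`. -/
theorem derivative_in_s_properties
    (p q m : ℝ → ℝ) (a s : ℝ) (u u' : ℝ → ℝ → ℝ) (v v' : ℝ → ℝ)
    (hp : Continuous p) (hq : Continuous q) (hm : Continuous m)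
    (hppos : ∀ t, 0 < p t) (hqnn : ∀ t, 0 ≤ q t)
    (hsol : ∀ σ : ℝ, u σ σ = 0 ∧ u' σ σ = 1 / p σ ∧
      ∀ t, HasDerivAt (u σ) (u' σ t) t ∧
        HasDerivAt (fun τ => p τ * u' σ τ) (q t * u σ t - a * m t * u σ t) t)
    (hu : Continuous fun x : ℝ × ℝ => u x.1 x.2)
    (hu' : Continuous fun x : ℝ × ℝ => u' x.1 x.2)
    (hv : ∀ t, HasDerivAt (fun σ => u σ t) (v t) s)
    (hv' : ∀ t, HasDerivAt (fun σ => u' σ t) (v' t) s)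
    (hne : {t | s < t ∧ u s t = 0}.Nonempty) :
    v s = -(1 / p s) ∧ v s < 0 ∧
      (∀ t, HasDerivAt v (v' t) t ∧
        HasDerivAt (fun τ => p τ * v' τ) (q t * v t - a * m t * v t) t) ∧
      0 < v (sInf {t | s < t ∧ u s t = 0}) := by
  have hpos' : 0 < 1 / p s := one_div_pos.mpr (hppos s)
  have hUcont : Continuous (u s) := hu.comp (continuous_const.prodMk continuous_id)
  have hds : HasDerivAt (u s) (1 / p s) s := by
    have h := ((hsol s).2.2 s).1; rwa [(hsol s).2.1] at h
  have hslope : Filter.Tendsto (slope (u s) s) (nhdsWithin s {s}ᶜ) (nhds (1 / p s)) :=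
    hasDerivAt_iff_tendsto_slope.mp hds
  have hevent : ∀ᶠ x in nhdsWithin s {s}ᶜ, 0 < slope (u s) s x :=
    hslope.eventually (eventually_gt_nhds hpos')
  have hslx : ∀ x : ℝ, x ≠ s → u s x = slope (u s) s x * (x - s) := by
    intro x hx
    rw [slope_def_field, (hsol s).1, sub_zero, div_mul_cancel₀ _ (sub_ne_zero.mpr hx)]
  -- positivity just after s
  have hposr : ∀ᶠ x in nhdsWithin s (Ioi s), 0 < u s x := by
    have h1 : nhdsWithin s (Ioi s) ≤ nhdsWithin s {s}ᶜ :=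
      nhdsWithin_mono s fun x hx => ne_of_gt hx
    filter_upwards [hevent.filter_mono h1, eventually_mem_nhdsWithin] with x hx hx'
    rw [hslx x (ne_of_gt hx')]
    exact mul_pos hx (sub_pos.mpr hx')
  obtain ⟨b, hbs, hIoosub⟩ := mem_nhdsGT_iff_exists_Ioo_subset.mp hposr
  rw [mem_Ioi] at hbs
  -- negativity just before s : gives t₁
  have hnegl : ∀ᶠ x in nhdsWithin s (Iio s), u s x < 0 := by
    have h1 : nhdsWithin s (Iio s) ≤ nhdsWithin s {s}ᶜ :=
      nhdsWithin_mono s fun x hx => ne_of_lt hx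
    filter_upwards [hevent.filter_mono h1, eventually_mem_nhdsWithin] with x hx hx'
    rw [hslx x (ne_of_lt hx')]
    exact mul_neg_of_pos_of_neg hx (sub_neg.mpr hx')
  obtain ⟨t₁, hneg1, ht₁s⟩ := (hnegl.and eventually_mem_nhdsWithin).exists
  rw [mem_Iio] at ht₁s
  have hne1 : u s t₁ ≠ 0 := ne_of_lt hneg1
  -- the zero set
  set Z : Set ℝ := {t | s < t ∧ u s t = 0} with hZdef
  have hZ2 : Z = {t | u s t = 0} ∩ Ici b := by
    ext t
    constructor
    · rintro ⟨hst, h0⟩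
      refine ⟨h0, ?_⟩
      by_contra hlt
      rw [mem_Ici, not_le] at hlt
      have := hIoosub ⟨hst, hlt⟩
      rw [mem_setOf_eq, h0] at this
      exact lt_irrefl 0 this
    · rintro ⟨h0, hbt⟩
      exact ⟨lt_of_lt_of_le hbs hbt, h0⟩
  have hZbdd : BddBelow ({t | u s t = 0} ∩ Ici b) := ⟨b, fun x hx => hx.2⟩
  have hZcl : IsClosed ({t | u s t = 0} ∩ Ici b) :=
    (isClosed_eq hUcont continuous_const).inter isClosed_Ici
  have hφmem : sInf Z ∈ Z := by
    rw [hZ2]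
    exact hZcl.csInf_mem (hZ2 ▸ hne) hZbdd
  set φ := sInf Z with hφdef
  have hsltφ : s < φ := hφmem.1
  have hUφ : u s φ = 0 := hφmem.2
  have hφlow : ∀ t ∈ Z, φ ≤ t := fun t ht => csInf_le (hZ2 ▸ hZbdd) ht
  -- positivity on (s, φ)
  have hposIoo : ∀ t ∈ Ioo s φ, 0 < u s t := by
    intro t ht
    rcases lt_trichotomy (u s t) 0 with hlt | heq0 | hgt
    · exfalso
      have hmin : s < min t b := lt_min ht.1 hbs
      set t' : ℝ := (s + min t b) / 2 with ht'def
      have ht'1 : s < t' := by dsimp [t']; linarith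
      have ht'2 : t' < min t b := by dsimp [t']; linarith
      have hpos2 : 0 < u s t' :=
        hIoosub ⟨ht'1, lt_of_lt_of_le ht'2 (min_le_right _ _)⟩
      have ht't : t' < t := lt_of_lt_of_le ht'2 (min_le_left _ _)
      have hmem0 : (0:ℝ) ∈ Ioo (u s t) (u s t') := ⟨hlt, hpos2⟩
      obtain ⟨cc, hcc, hcc0⟩ := intermediate_value_Ioo' (le_of_lt ht't) hUcont.continuousOn hmem0
      have hccZ : cc ∈ Z := ⟨lt_trans ht'1 hcc.1, hcc0⟩
      have := hφlow cc hccZ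
      linarith [hcc.2, ht.2]
    · exfalso
      have : t ∈ Z := ⟨ht.1, heq0⟩
      have := hφlow t this
      linarith [ht.2]
    · exact hgt
  -- u' s φ < 0
  have hU'φle : u' s φ ≤ 0 := by
    have hslopeφ : Filter.Tendsto (slope (u s) φ) (nhdsWithin φ {φ}ᶜ) (nhds (u' s φ)) :=
      hasDerivAt_iff_tendsto_slope.mp ((hsol s).2.2 φ).1
    have hmono : nhdsWithin φ (Iio φ) ≤ nhdsWithin φ {φ}ᶜ :=
      nhdsWithin_mono φ fun x hx => ne_of_lt hx
    have hEv : ∀ᶠ x in nhdsWithin φ (Iio φ), slope (u s) φ x ≤ 0 := by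
      filter_upwards [Ioo_mem_nhdsLT_of_mem (⟨hsltφ, le_refl φ⟩ : φ ∈ Ioc s φ)] with x hx
      have hx1 : 0 < u s x := hposIoo x hx
      rw [slope_def_field, hUφ, sub_zero]
      exact le_of_lt (div_neg_of_pos_of_neg hx1 (sub_neg.mpr hx.2))
    exact le_of_tendsto (hslopeφ.mono_left hmono) hEv
  have hU'φne : u' s φ ≠ 0 := by
    intro h00
    have hz0 : ∀ t : ℝ, HasDerivAt (fun _ : ℝ => (0:ℝ)) 0 t ∧
        HasDerivAt (fun τ => p τ * 0) (q t * 0 - a * m t * 0) t := by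
      intro t
      refine ⟨hasDerivAt_const t 0, ?_⟩
      simp only [mul_zero, sub_zero]
      exact hasDerivAt_const t 0
    have hun := sl_unique (z := fun _ => 0) (z' := fun _ => 0) hp hq hm hppos
      ((hsol s).2.2) hz0 hUφ h00
    have h2 := hun.2 s
    rw [(hsol s).2.1] at h2
    exact absurd h2 (ne_of_gt hpos')
  have hU'φneg : u' s φ < 0 := lt_of_le_of_ne hU'φle hU'φne
  -- the combination
  set c₁ : ℝ → ℝ := fun σ => u σ t₁ / u s t₁ with hc₁def
  set c₂ : ℝ → ℝ := fun σ => p t₁ * (u' σ t₁ - c₁ σ * u' s t₁) with hc₂def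
  have hcomb : ∀ σ, (∀ t, u σ t = c₁ σ * u s t + c₂ σ * u t₁ t) ∧
      (∀ t, u' σ t = c₁ σ * u' s t + c₂ σ * u' t₁ t) := by
    intro σ
    have hz : ∀ t, HasDerivAt (fun τ => c₁ σ * u s τ + c₂ σ * u t₁ τ)
        (c₁ σ * u' s t + c₂ σ * u' t₁ t) t ∧
        HasDerivAt (fun τ => p τ * (c₁ σ * u' s τ + c₂ σ * u' t₁ τ))
          (q t * (c₁ σ * u s t + c₂ σ * u t₁ t) -
            a * m t * (c₁ σ * u s t + c₂ σ * u t₁ t)) t := by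
      intro t
      constructor
      · exact (((hsol s).2.2 t).1.const_mul _).add (((hsol t₁).2.2 t).1.const_mul _)
      · have h := (((hsol s).2.2 t).2.const_mul (c₁ σ)).add (((hsol t₁).2.2 t).2.const_mul (c₂ σ))
        have hfe : (fun τ => p τ * (c₁ σ * u' s τ + c₂ σ * u' t₁ τ))
            = fun τ => c₁ σ * (p τ * u' s τ) + c₂ σ * (p τ * u' t₁ τ) := funext fun τ => by ring
        rw [hfe]
        exact h.congr_deriv (by ring)
    have h0 : u σ t₁ = c₁ σ * u s t₁ + c₂ σ * u t₁ t₁ := by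
      rw [(hsol t₁).1, mul_zero, add_zero, hc₁def]
      exact (div_mul_cancel₀ _ hne1).symm
    have h1 : u' σ t₁ = c₁ σ * u' s t₁ + c₂ σ * u' t₁ t₁ := by
      rw [(hsol t₁).2.1, hc₂def]
      field_simp [(hppos t₁).ne']
      ring
    exact sl_unique (z := fun t => c₁ σ * u s t + c₂ σ * u t₁ t)
      (z' := fun t => c₁ σ * u' s t + c₂ σ * u' t₁ t) hp hq hm hppos
      ((hsol σ).2.2) hz h0 h1
  set d₁ : ℝ := v t₁ / u s t₁ with hd₁def
  set d₂ : ℝ := p t₁ * (v' t₁ - d₁ * u' s t₁) with hd₂def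
  have hd₁ : HasDerivAt c₁ d₁ s := (hv t₁).div_const _
  have hd₂ : HasDerivAt c₂ d₂ s := ((hv' t₁).sub (hd₁.mul_const _)).const_mul _
  have hvrep : ∀ t, v t = d₁ * u s t + d₂ * u t₁ t := by
    intro t
    have h : (fun σ => u σ t) = fun σ => c₁ σ * u s t + c₂ σ * u t₁ t :=
      funext fun σ => (hcomb σ).1 t
    have h2 := hv t
    rw [h] at h2
    exact h2.unique ((hd₁.mul_const _).add (hd₂.mul_const _))
  have hv'rep : ∀ t, v' t = d₁ * u' s t + d₂ * u' t₁ t := by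
    intro t
    have h : (fun σ => u' σ t) = fun σ => c₁ σ * u' s t + c₂ σ * u' t₁ t :=
      funext fun σ => (hcomb σ).2 t
    have h2 := hv' t
    rw [h] at h2
    exact h2.unique ((hd₁.mul_const _).add (hd₂.mul_const _))
  have hveq : v = fun t => d₁ * u s t + d₂ * u t₁ t := funext hvrep
  have hv'eq : v' = fun t => d₁ * u' s t + d₂ * u' t₁ t := funext hv'rep
  have hc₁s : c₁ s = 1 := div_self hne1
  have hc₂s : c₂ s = 0 := by rw [hc₂def]; simp [hc₁s]
  -- v s = -(1/p s)
  have hgd : HasDerivAt (fun σ => c₁ σ * u s σ + c₂ σ * u t₁ σ)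
      (d₁ * u s s + c₁ s * u' s s + (d₂ * u t₁ s + c₂ s * u' t₁ s)) s :=
    (hd₁.mul ((hsol s).2.2 s).1).add (hd₂.mul ((hsol t₁).2.2 s).1)
  have hg0 : (fun σ => c₁ σ * u s σ + c₂ σ * u t₁ σ) = fun _ => (0:ℝ) :=
    funext fun σ => by rw [← (hcomb σ).1 σ]; exact (hsol σ).1
  rw [hg0] at hgd
  have h0' := hgd.unique (hasDerivAt_const s 0)
  rw [(hsol s).1, hc₁s, hc₂s, (hsol s).2.1] at h0'
  have part1 : v s = -(1 / p s) := by
    rw [hvrep s, (hsol s).1]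
    linear_combination h0'
  have part2 : v s < 0 := by rw [part1]; exact neg_lt_zero.mpr hpos'
  -- v satisfies the equation
  have heqn : ∀ t, HasDerivAt v (v' t) t ∧
      HasDerivAt (fun τ => p τ * v' τ) (q t * v t - a * m t * v t) t := by
    simp only [hveq, hv'eq]
    intro t
    constructor
    · exact (((hsol s).2.2 t).1.const_mul _).add (((hsol t₁).2.2 t).1.const_mul _)
    · have h := (((hsol s).2.2 t).2.const_mul d₁).add (((hsol t₁).2.2 t).2.const_mul d₂)
      have hfe : (fun τ => p τ * (d₁ * u' s τ + d₂ * u' t₁ τ))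
          = fun τ => d₁ * (p τ * u' s τ) + d₂ * (p τ * u' t₁ τ) := funext fun τ => by ring
      rw [hfe]
      exact h.congr_deriv (by ring)
  -- Wronskian
  set W : ℝ → ℝ := fun t => v t * (p t * u' s t) - u s t * (p t * v' t) with hWdef
  have hWd : ∀ t, HasDerivAt W 0 t := by
    intro t
    have h := ((heqn t).1.mul ((hsol s).2.2 t).2).sub (((hsol s).2.2 t).1.mul (heqn t).2)
    exact h.congr_deriv (by ring)
  have hWc : W φ = W s :=
    is_const_of_deriv_eq_zero (fun x => (hWd x).differentiableAt) (fun x => (hWd x).deriv) φ s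
  have hWs : W s = v s := by
    rw [hWdef]
    simp only [(hsol s).1, (hsol s).2.1, zero_mul, sub_zero]
    rw [mul_one_div_cancel (hppos s).ne', mul_one]
  have hWφ : W φ = v φ * (p φ * u' s φ) := by
    rw [hWdef]
    simp only [hUφ, zero_mul, sub_zero]
  have hkey : v φ * (p φ * u' s φ) = -(1 / p s) := by
    rw [← hWφ, hWc, hWs, part1]
  have hA : p φ * u' s φ < 0 := mul_neg_of_pos_of_neg (hppos φ) hU'φneg
  have part4 : 0 < v φ := by
    by_contra h
    push_neg at h
    have h2 := mul_nonneg (neg_nonneg.mpr h) (neg_nonneg.mpr hA.le)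
    rw [neg_mul_neg, hkey] at h2
    linarith
  exact ⟨part1, part2, heqn, part4⟩
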